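/- Let K_* act on G_* in the category of strongly central filtrations, i.e. K₁ acts on G₁ by automorphisms preserving each G_i, with [K_i, G_j] ⊆ G_{i+j} in the semidirect product for all i,j. Then the map τ sending k ∈ K_i to the degree-i map of graded abelian groups G_j/G_{j+1} → G_{i+j}/G_{i+j+1}, g ↦ class of (k·g)g⁻¹, induces a well-defined homomorphism from K_i/K_{i+1} to degree-i derivations of the graded Lie ring Lie(G_*). -/

import Mathlib

open SemidirectProduct

open scoped commutatorElement

section JMAux

variable {P : Type*} [Group P] {C : ℕ → Subgroup P}

private theorem jm_mono (hdec : ∀ i, C (i + 1) ≤ C i) :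
    ∀ {m n : ℕ}, n ≤ m → C m ≤ C n := by
  intro m n h
  induction h with
  | refl => exact le_rfl
  | step h ih => exact le_trans (hdec _) ih

private theorem jm_abs1
    (hconj : ∀ (n : ℕ) (x p : P), p ∈ C n → x * p * x⁻¹ ∈ C n)
    (hsc : ∀ i j, ∀ a ∈ C i, ∀ b ∈ C j, ⁅a, b⁆ ∈ C (i + j + 1)) :
    ∀ i j, ∀ a ∈ C i, ∀ b ∈ C j, ∀ b' ∈ C j, b⁻¹ * b' ∈ C (j + 1) →
      ⁅a, b⁆⁻¹ * ⁅a, b'⁆ ∈ C (i + j + 2) := by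
  intro i j a ha b hb b' hb' hd
  have h1 : ⁅a, b⁻¹ * b'⁆ ∈ C (i + (j + 1) + 1) := hsc i (j + 1) a ha _ hd
  have h2 : ⁅a, b⁆⁻¹ * ⁅a, b'⁆ = b * ⁅a, b⁻¹ * b'⁆ * b⁻¹ := by
    simp only [commutatorElement_def]; group
  rw [h2]
  exact hconj _ b _ h1

private theorem jm_abs2
    (hmono : ∀ {m n : ℕ}, n ≤ m → C m ≤ C n)
    (hsc : ∀ i j, ∀ a ∈ C i, ∀ b ∈ C j, ⁅a, b⁆ ∈ C (i + j + 1)) :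
    ∀ i j, ∀ a ∈ C i, ∀ b ∈ C j, ∀ b' ∈ C j,
      ⁅a, b * b'⁆⁻¹ * (⁅a, b⁆ * ⁅a, b'⁆) ∈ C (i + j + 2) := by
  intro i j a ha b hb b' hb'
  have h1 : ⁅b, ⁅a, b'⁆⁻¹⁆ ∈ C (j + (i + j + 1) + 1) :=
    hsc j (i + j + 1) b hb _ (inv_mem (hsc i j a ha b' hb'))
  have h2 : ⁅a, b * b'⁆⁻¹ * (⁅a, b⁆ * ⁅a, b'⁆) = ⁅b, ⁅a, b'⁆⁻¹⁆ := by
    simp only [commutatorElement_def]; group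
  rw [h2]
  exact hmono (by omega) h1

private theorem jm_abs4
    (hconj : ∀ (n : ℕ) (x p : P), p ∈ C n → x * p * x⁻¹ ∈ C n)
    (hsc : ∀ i j, ∀ a ∈ C i, ∀ b ∈ C j, ⁅a, b⁆ ∈ C (i + j + 1)) :
    ∀ i j, ∀ a ∈ C i, ∀ a' ∈ C i, a⁻¹ * a' ∈ C (i + 1) → ∀ b ∈ C j,
      ⁅a, b⁆⁻¹ * ⁅a', b⁆ ∈ C (i + j + 2) := by
  intro i j a ha a' ha' hd b hb
  have h1 : ⁅a⁻¹ * a', b⁆ ∈ C (i + 1 + j + 1) := hsc (i + 1) j _ hd b hb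
  have h1' : ⁅a⁻¹ * a', b⁆ ∈ C (i + j + 2) := by
    have : i + 1 + j + 1 = i + j + 2 := by omega
    rwa [this] at h1
  have h2 : ⁅a, b⁆⁻¹ * ⁅a', b⁆ =
      ⁅a, b⁆⁻¹ * (a * ⁅a⁻¹ * a', b⁆ * a⁻¹) * ⁅a, b⁆ := by
    simp only [commutatorElement_def]; group
  rw [h2]
  have h3 := hconj _ a _ h1'
  have h4 := hconj _ ⁅a, b⁆⁻¹ _ h3
  simpa only [inv_inv, mul_assoc] using h4

private theorem jm_abs5
    (hmono : ∀ {m n : ℕ}, n ≤ m → C m ≤ C n)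
    (hconj : ∀ (n : ℕ) (x p : P), p ∈ C n → x * p * x⁻¹ ∈ C n)
    (hsc : ∀ i j, ∀ a ∈ C i, ∀ b ∈ C j, ⁅a, b⁆ ∈ C (i + j + 1)) :
    ∀ i j, ∀ a ∈ C i, ∀ a' ∈ C i, ∀ b ∈ C j,
      ⁅a * a', b⁆⁻¹ * (⁅a, b⁆ * ⁅a', b⁆) ∈ C (i + j + 2) := by
  intro i j a ha a' ha' b hb
  have hw : ⁅a', b⁆ ∈ C (i + j + 1) := hsc i j a' ha' b hb
  have hz : ⁅a, b⁆ ∈ C (i + j + 1) := hsc i j a ha b hb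
  have h1 : ⁅a, ⁅a', b⁆⁻¹⁆ ∈ C (i + (i + j + 1) + 1) :=
    hsc i (i + j + 1) a ha _ (inv_mem hw)
  have h2 : ⁅⁅a, b⁆⁻¹, ⁅a', b⁆⁻¹⁆ ∈ C ((i + j + 1) + (i + j + 1) + 1) :=
    hsc _ _ _ (inv_mem hz) _ (inv_mem hw)
  have h3 : ⁅a * a', b⁆⁻¹ * (⁅a, b⁆ * ⁅a', b⁆) =
      (⁅a, b⁆⁻¹ * ⁅a, ⁅a', b⁆⁻¹⁆ * ⁅a, b⁆) * ⁅⁅a, b⁆⁻¹, ⁅a', b⁆⁻¹⁆ := by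
    simp only [commutatorElement_def]; group
  rw [h3]
  refine mul_mem ?_ (hmono (by omega) h2)
  have h1' : ⁅a, ⁅a', b⁆⁻¹⁆ ∈ C (i + j + 2) := hmono (by omega) h1
  have h4 := hconj _ ⁅a, b⁆⁻¹ _ h1'
  simpa only [inv_inv, mul_assoc] using h4

private theorem jm_abs3
    (hmono : ∀ {m n : ℕ}, n ≤ m → C m ≤ C n)
    (hconj : ∀ (n : ℕ) (x p : P), p ∈ C n → x * p * x⁻¹ ∈ C n)
    (hsc : ∀ i j, ∀ a ∈ C i, ∀ b ∈ C j, ⁅a, b⁆ ∈ C (i + j + 1)) :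
    ∀ i j j', ∀ a ∈ C i, ∀ b ∈ C j, ∀ c ∈ C j',
      ⁅a, ⁅b, c⁆⁆⁻¹ * (⁅⁅a, b⁆, c⁆ * ⁅b, ⁅a, c⁆⁆) ∈ C (i + j + j' + 3) := by
  intro i j j' a ha b hb c hc
  haveI : (C (i + j + j' + 3)).Normal := ⟨fun p hp x => hconj _ x p hp⟩
  set π := QuotientGroup.mk' (C (i + j + j' + 3)) with hπ
  rw [← QuotientGroup.ker_mk' (C (i + j + j' + 3)), ← hπ, MonoidHom.mem_ker]
  have com : ∀ x y : P, ⁅x, y⁆ ∈ C (i + j + j' + 3) → Commute (π x) (π y) := by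
    intro x y h
    have h1 : π ⁅x, y⁆ = 1 := by
      rw [← MonoidHom.mem_ker, hπ, QuotientGroup.ker_mk']; exact h
    rw [map_commutatorElement] at h1
    exact commutatorElement_eq_one_iff_commute.mp h1
  have hu : ⁅a, b⁆ ∈ C (i + j + 1) := hsc i j a ha b hb
  have hv : ⁅a, c⁆ ∈ C (i + j' + 1) := hsc i j' a ha c hc
  have hbc : ⁅b, c⁆ ∈ C (j + j' + 1) := hsc j j' b hb c hc
  have huc : ⁅⁅a, b⁆, c⁆ ∈ C ((i + j + 1) + j' + 1) := hsc _ j' _ hu c hc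
  have hbv : ⁅b, ⁅a, c⁆⁆ ∈ C (j + (i + j' + 1) + 1) := hsc j _ b hb _ hv
  have h1 : Commute ⁅π a, π b⁆ ⁅π a, π c⁆ := by
    simpa only [map_commutatorElement] using
      com _ _ (hmono (by omega) (hsc _ _ _ hu _ hv))
  have h2 : Commute ⁅π a, π c⁆ ⁅π b, π c⁆ := by
    simpa only [map_commutatorElement] using
      com _ _ (hmono (by omega) (hsc _ _ _ hv _ hbc))
  have h3 : Commute ⁅π a, π c⁆ ⁅⁅π a, π b⁆, π c⁆ := by
    simpa only [map_commutatorElement] using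
      com _ _ (hmono (by omega) (hsc _ _ _ hv _ huc))
  have h4 : Commute ⁅π a, π b⁆ ⁅π b, ⁅π a, π c⁆⁆ := by
    simpa only [map_commutatorElement] using
      com _ _ (hmono (by omega) (hsc _ _ _ hu _ hbv))
  have h5 : Commute ⁅π a, π b⁆ ⁅π b, π c⁆ := by
    simpa only [map_commutatorElement] using
      com _ _ (hmono (by omega) (hsc _ _ _ hu _ hbc))
  have h6 : Commute ⁅π b, π c⁆ ⁅⁅π a, π b⁆, π c⁆ := by
    simpa only [map_commutatorElement] using
      com _ _ (hmono (by omega) (hsc _ _ _ hbc _ huc))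
  have h7 : Commute ⁅⁅π a, π b⁆, π c⁆ ⁅π b, ⁅π a, π c⁆⁆ := by
    simpa only [map_commutatorElement] using
      com _ _ (hmono (by omega) (hsc _ _ _ huc _ hbv))
  have key : ⁅π a, ⁅π b, π c⁆⁆ = ⁅⁅π a, π b⁆, π c⁆ * ⁅π b, ⁅π a, π c⁆⁆ := by
    have e1 : ⁅π a, ⁅π b, π c⁆⁆ =
        ⁅π a, π b⁆ * (⁅π b, ⁅π a, π c⁆⁆ * (⁅π a, π c⁆ * ⁅π b, π c⁆ * ⁅π a, π c⁆⁻¹)) *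
            ⁅π a, π b⁆⁻¹ *
          (⁅⁅π a, π b⁆, ⁅π a, π c⁆⁆ * (⁅π a, π c⁆ * ⁅⁅π a, π b⁆, π c⁆ * ⁅π a, π c⁆⁻¹)) *
          ⁅π c, π b⁆ := by
      simp only [commutatorElement_def]; group
    have c1 : ⁅⁅π a, π b⁆, ⁅π a, π c⁆⁆ = 1 := commutatorElement_eq_one_iff_commute.mpr h1
    have c2 : ⁅π a, π c⁆ * ⁅π b, π c⁆ * ⁅π a, π c⁆⁻¹ = ⁅π b, π c⁆ := by
      rw [h2.eq, mul_inv_cancel_right]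
    have c3 : ⁅π a, π c⁆ * ⁅⁅π a, π b⁆, π c⁆ * ⁅π a, π c⁆⁻¹ = ⁅⁅π a, π b⁆, π c⁆ := by
      rw [h3.eq, mul_inv_cancel_right]
    have c4 : ⁅π a, π b⁆ * (⁅π b, ⁅π a, π c⁆⁆ * ⁅π b, π c⁆) * ⁅π a, π b⁆⁻¹ =
        ⁅π b, ⁅π a, π c⁆⁆ * ⁅π b, π c⁆ := by
      rw [(h4.mul_right h5).eq, mul_inv_cancel_right]
    rw [e1, c1, c2, c3, c4, one_mul]
    have e2 : ⁅π b, ⁅π a, π c⁆⁆ * ⁅π b, π c⁆ * ⁅⁅π a, π b⁆, π c⁆ * ⁅π c, π b⁆ =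
        ⁅π b, ⁅π a, π c⁆⁆ * (⁅π b, π c⁆ * ⁅⁅π a, π b⁆, π c⁆) * ⁅π c, π b⁆ := by
      group
    rw [e2, h6.eq]
    have e3 : ⁅π b, ⁅π a, π c⁆⁆ * (⁅⁅π a, π b⁆, π c⁆ * ⁅π b, π c⁆) * ⁅π c, π b⁆ =
        ⁅π b, ⁅π a, π c⁆⁆ * ⁅⁅π a, π b⁆, π c⁆ * (⁅π b, π c⁆ * ⁅π c, π b⁆) := by
      group
    have e4 : ⁅π b, π c⁆ * ⁅π c, π b⁆ = 1 := by
      simp only [commutatorElement_def]; group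
    rw [e3, e4, mul_one, ← h7.eq]
  simp only [map_mul, map_inv, map_commutatorElement]
  rw [key]
  group

end JMAux

/-- The Johnson morphism is well defined. Let `K` act on `G` via `φ`, with strongly
central filtrations `A_*` on `G` and `B_*` on `K` (0-based: index `i` is the `(i+1)`-st
term) such that `[B_i, A_j] ⊆ A_{i+j}` (paper indexing). Then the map sending `k ∈ B_i`
to `g ↦ (k·g)g⁻¹` on graded pieces is: well defined in `g`, additive in `g`, a graded
derivation with respect to the Lie bracket, well defined in `k` modulo `B_{i+1}`, and
multiplicative in `k` — i.e. it induces a homomorphism `B_i/B_{i+1} →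
Der_i(Lie(A_*))`. -/
theorem johnson_morphism_well_defined {G K : Type*} [Group G] [Group K]
    (φ : K →* MulAut G) (A : ℕ → Subgroup G) (B : ℕ → Subgroup K)
    (hA0 : A 0 = ⊤) (hB0 : B 0 = ⊤)
    (hAdec : ∀ i, A (i + 1) ≤ A i) (hBdec : ∀ i, B (i + 1) ≤ B i)
    (hAsc : ∀ i j, ∀ g ∈ A i, ∀ g' ∈ A j, ⁅g, g'⁆ ∈ A (i + j + 1))
    (hBsc : ∀ i j, ∀ k ∈ B i, ∀ k' ∈ B j, ⁅k, k'⁆ ∈ B (i + j + 1))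
    (hφ : ∀ (k : K) (j : ℕ), ∀ g ∈ A j, φ k g ∈ A j)
    (hact : ∀ i j, ∀ k ∈ B i, ∀ g ∈ A j, φ k g * g⁻¹ ∈ A (i + j + 1)) :
    -- well defined in `g`
    (∀ i j, ∀ k ∈ B i, ∀ g ∈ A j, ∀ g' ∈ A j, g⁻¹ * g' ∈ A (j + 1) →
        (φ k g * g⁻¹)⁻¹ * (φ k g' * g'⁻¹) ∈ A (i + j + 2)) ∧
    -- additive in `g`
    (∀ i j, ∀ k ∈ B i, ∀ g ∈ A j, ∀ g' ∈ A j,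
        (φ k (g * g') * (g * g')⁻¹)⁻¹ * ((φ k g * g⁻¹) * (φ k g' * g'⁻¹)) ∈
          A (i + j + 2)) ∧
    -- derivation property
    (∀ i j j', ∀ k ∈ B i, ∀ g ∈ A j, ∀ g' ∈ A j',
        (φ k ⁅g, g'⁆ * ⁅g, g'⁆⁻¹)⁻¹ *
            (⁅φ k g * g⁻¹, g'⁆ * ⁅g, φ k g' * g'⁻¹⁆) ∈ A (i + j + j' + 3)) ∧
    -- well defined in `k` modulo `B_{i+1}`
    (∀ i j, ∀ k ∈ B i, ∀ k' ∈ B i, k⁻¹ * k' ∈ B (i + 1) → ∀ g ∈ A j,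
        (φ k g * g⁻¹)⁻¹ * (φ k' g * g⁻¹) ∈ A (i + j + 2)) ∧
    -- multiplicative in `k`
    (∀ i j, ∀ k ∈ B i, ∀ k' ∈ B i, ∀ g ∈ A j,
        (φ (k * k') g * g⁻¹)⁻¹ * ((φ k g * g⁻¹) * (φ k' g * g⁻¹)) ∈ A (i + j + 2)) := by
  -- Normality of the filtration subgroups
  have Anorm : ∀ (n : ℕ) (x g : G), g ∈ A n → x * g * x⁻¹ ∈ A n := by
    intro n x g hg
    have h1 : ⁅x, g⁆ ∈ A (0 + n + 1) := hAsc 0 n x (by simp [hA0]) g hg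
    have h2 : x * g * x⁻¹ = ⁅x, g⁆ * g := by
      simp only [commutatorElement_def]; group
    rw [h2]
    exact mul_mem (hAdec n (by simpa using h1)) hg
  have Bnorm : ∀ (n : ℕ) (x k : K), k ∈ B n → x * k * x⁻¹ ∈ B n := by
    intro n x k hk
    have h1 : ⁅x, k⁆ ∈ B (0 + n + 1) := hBsc 0 n x (by simp [hB0]) k hk
    have h2 : x * k * x⁻¹ = ⁅x, k⁆ * k := by
      simp only [commutatorElement_def]; group
    rw [h2]
    exact mul_mem (hBdec n (by simpa using h1)) hk
  -- The filtration on the semidirect product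
  set C : ℕ → Subgroup (G ⋊[φ] K) := fun n =>
    { carrier := {p | p.left ∈ A n ∧ p.right ∈ B n}
      one_mem' := ⟨by rw [one_left]; exact one_mem _, by rw [one_right]; exact one_mem _⟩
      mul_mem' := by
        rintro p q ⟨hp1, hp2⟩ ⟨hq1, hq2⟩
        exact ⟨by rw [mul_left]; exact mul_mem hp1 (hφ _ _ _ hq1),
               by rw [mul_right]; exact mul_mem hp2 hq2⟩
      inv_mem' := by
        rintro p ⟨hp1, hp2⟩
        exact ⟨by rw [inv_left]; exact hφ _ _ _ (inv_mem hp1),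
               by rw [inv_right]; exact inv_mem hp2⟩ } with hCdef
  have memC : ∀ (n : ℕ) (p : G ⋊[φ] K), p ∈ C n ↔ (p.left ∈ A n ∧ p.right ∈ B n) :=
    fun n p => Iff.rfl
  have memCL : ∀ (n : ℕ) (g : G), (inl g : G ⋊[φ] K) ∈ C n ↔ g ∈ A n := by
    intro n g
    rw [memC]
    simp only [left_inl, right_inl]
    exact and_iff_left (one_mem _)
  have memCR : ∀ (n : ℕ) (k : K), (inr k : G ⋊[φ] K) ∈ C n ↔ k ∈ B n := by
    intro n k
    rw [memC]
    simp only [left_inr, right_inr]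
    exact and_iff_right (one_mem _)
  -- key commutator formula
  have comm_ri : ∀ (k : K) (g : G),
      ⁅(inr k : G ⋊[φ] K), (inl g : G ⋊[φ] K)⁆ = inl (φ k g * g⁻¹) := by
    intro k g
    rw [commutatorElement_def, ← map_inv, ← map_inv, ← inl_aut, ← map_mul]
  -- conjugation stability
  have conjL : ∀ (n : ℕ) (x : G ⋊[φ] K) (g : G), g ∈ A n →
      x * inl g * x⁻¹ ∈ C n := by
    intro n x g hg
    have key : x * inl g * x⁻¹ = inl (x.left * φ x.right g * x.left⁻¹) := by
      conv_lhs => rw [← inl_left_mul_inr_right x]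
      have e : (inl x.left * inr x.right : G ⋊[φ] K) * inl g *
          (inl x.left * inr x.right)⁻¹ =
          inl x.left * (inr x.right * inl g * (inr x.right)⁻¹) * (inl x.left)⁻¹ := by
        group
      rw [e, ← map_inv, ← inl_aut, ← map_inv, ← map_mul, ← map_mul]
    rw [key, memCL]
    exact Anorm n x.left _ (hφ _ _ _ hg)
  have conjR : ∀ (n : ℕ) (x : G ⋊[φ] K) (k : K), k ∈ B n →
      x * inr k * x⁻¹ ∈ C n := by
    intro n x k hk
    have hκ : x.right * k * x.right⁻¹ ∈ B n := Bnorm n x.right k hk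
    have key : x * inr k * x⁻¹ =
        inl (x.left * φ (x.right * k * x.right⁻¹) x.left⁻¹) *
          inr (x.right * k * x.right⁻¹) := by
      conv_lhs => rw [← inl_left_mul_inr_right x]
      have e : (inl x.left * inr x.right : G ⋊[φ] K) * inr k *
          (inl x.left * inr x.right)⁻¹ =
          inl x.left * (inr x.right * inr k * (inr x.right)⁻¹ * (inl x.left)⁻¹) := by
        group
      rw [e, ← map_inv, ← map_mul, ← map_mul, ← map_inv]
      have e2 : (inr (x.right * k * x.right⁻¹) : G ⋊[φ] K) * inl x.left⁻¹ =
          inl (φ (x.right * k * x.right⁻¹) x.left⁻¹) * inr (x.right * k * x.right⁻¹) := by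
        rw [inl_aut]
        simp only [map_inv]
        group
      rw [e2, ← mul_assoc, ← map_mul]
    rw [key, memC]
    constructor
    · have hleft : (inl (x.left * φ (x.right * k * x.right⁻¹) x.left⁻¹) *
          inr (x.right * k * x.right⁻¹) : G ⋊[φ] K).left =
          x.left * φ (x.right * k * x.right⁻¹) x.left⁻¹ := by
        rw [mul_left, left_inl, right_inl, left_inr]
        simp
      rw [hleft]
      have h1 : φ (x.right * k * x.right⁻¹) x.left⁻¹ * x.left ∈ A n := by
        have := hact n 0 _ hκ x.left⁻¹ (by simp [hA0])
        simpa using hAdec n (by simpa using this)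
      have h2 : x.left * φ (x.right * k * x.right⁻¹) x.left⁻¹ =
          x.left * (φ (x.right * k * x.right⁻¹) x.left⁻¹ * x.left) * x.left⁻¹ := by
        group
      rw [h2]
      exact Anorm n x.left _ h1
    · have hright : (inl (x.left * φ (x.right * k * x.right⁻¹) x.left⁻¹) *
          inr (x.right * k * x.right⁻¹) : G ⋊[φ] K).right =
          x.right * k * x.right⁻¹ := by
        rw [mul_right, right_inl, right_inr, one_mul]
      rw [hright]
      exact hκ
  have conjC : ∀ (n : ℕ) (x p : G ⋊[φ] K), p ∈ C n → x * p * x⁻¹ ∈ C n := by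
    intro n x p hp
    obtain ⟨hp1, hp2⟩ := (memC n p).mp hp
    have e : x * p * x⁻¹ = (x * inl p.left * x⁻¹) * (x * inr p.right * x⁻¹) := by
      conv_lhs => rw [← inl_left_mul_inr_right p]
      group
    rw [e]
    exact mul_mem (conjL n x _ hp1) (conjR n x _ hp2)
  -- strong centrality of C
  have hCsc : ∀ i j, ∀ p ∈ C i, ∀ q ∈ C j, ⁅p, q⁆ ∈ C (i + j + 1) := by
    intro i j p hp q hq
    obtain ⟨hp1, hp2⟩ := (memC i p).mp hp
    obtain ⟨hq1, hq2⟩ := (memC j q).mp hq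
    have hb1 : ⁅(inl p.left : G ⋊[φ] K), (inl q.left : G ⋊[φ] K)⁆ ∈ C (i + j + 1) := by
      rw [← map_commutatorElement]
      exact (memCL _ _).mpr (hAsc i j _ hp1 _ hq1)
    have hb2 : ⁅(inr p.right : G ⋊[φ] K), (inr q.right : G ⋊[φ] K)⁆ ∈ C (i + j + 1) := by
      rw [← map_commutatorElement]
      exact (memCR _ _).mpr (hBsc i j _ hp2 _ hq2)
    have hb3 : ⁅(inr p.right : G ⋊[φ] K), (inl q.left : G ⋊[φ] K)⁆ ∈ C (i + j + 1) := by
      rw [comm_ri]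
      exact (memCL _ _).mpr (hact i j _ hp2 _ hq1)
    have hb4 : ⁅(inl p.left : G ⋊[φ] K), (inr q.right : G ⋊[φ] K)⁆ ∈ C (i + j + 1) := by
      rw [← commutatorElement_inv, comm_ri]
      refine inv_mem ((memCL _ _).mpr ?_)
      have := hact j i _ hq2 _ hp1
      rwa [show j + i + 1 = i + j + 1 by omega] at this
    have hexp : ∀ a b c d : G ⋊[φ] K,
        ⁅a * b, c * d⁆ =
          a * (⁅b, c⁆ * (c * ⁅b, d⁆ * c⁻¹)) * a⁻¹ * (⁅a, c⁆ * (c * ⁅a, d⁆ * c⁻¹)) := by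
      intro a b c d
      simp only [commutatorElement_def]; group
    have hpq : ⁅p, q⁆ = ⁅(inl p.left * inr p.right : G ⋊[φ] K),
        (inl q.left * inr q.right : G ⋊[φ] K)⁆ := by
      rw [inl_left_mul_inr_right, inl_left_mul_inr_right]
    rw [hpq, hexp]
    exact mul_mem
      (conjC _ (inl p.left) _ (mul_mem hb3 (conjC _ (inl q.left) _ hb2)))
      (mul_mem hb1 (conjC _ (inl q.left) _ hb4))
  -- monotonicity
  have hCdec : ∀ i, C (i + 1) ≤ C i := by
    intro i p hp
    obtain ⟨h1, h2⟩ := (memC (i + 1) p).mp hp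
    exact (memC i p).mpr ⟨hAdec i h1, hBdec i h2⟩
  have hmono : ∀ {m n : ℕ}, n ≤ m → C m ≤ C n := fun {m n} h => jm_mono hCdec h
  refine ⟨?_, ?_, ?_, ?_, ?_⟩
  · -- well defined in g
    intro i j k hk g hg g' hg' hd
    have habs := jm_abs1 conjC hCsc i j (inr k) ((memCR i k).mpr hk)
      (inl g) ((memCL j g).mpr hg) (inl g') ((memCL j g').mpr hg')
      (by rw [← map_inv, ← map_mul]; exact (memCL _ _).mpr hd)
    rw [comm_ri, comm_ri, ← map_inv, ← map_mul] at habs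
    exact (memCL _ _).mp habs
  · -- additive in g
    intro i j k hk g hg g' hg'
    have habs := jm_abs2 hmono hCsc i j (inr k) ((memCR i k).mpr hk)
      (inl g) ((memCL j g).mpr hg) (inl g') ((memCL j g').mpr hg')
    rw [← map_mul, comm_ri, comm_ri, comm_ri, ← map_mul, ← map_inv, ← map_mul] at habs
    exact (memCL _ _).mp habs
  · -- derivation property
    intro i j j' k hk g hg g' hg'
    have habs := jm_abs3 hmono conjC hCsc i j j' (inr k) ((memCR i k).mpr hk)
      (inl g) ((memCL j g).mpr hg) (inl g') ((memCL j' g').mpr hg')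
    rw [← map_commutatorElement, comm_ri, comm_ri, comm_ri,
      ← map_commutatorElement, ← map_commutatorElement, ← map_mul, ← map_inv,
      ← map_mul] at habs
    exact (memCL _ _).mp habs
  · -- well defined in k
    intro i j k hk k' hk' hd g hg
    have habs := jm_abs4 conjC hCsc i j (inr k) ((memCR i k).mpr hk)
      (inr k') ((memCR i k').mpr hk')
      (by rw [← map_inv, ← map_mul]; exact (memCR _ _).mpr hd)
      (inl g) ((memCL j g).mpr hg)
    rw [comm_ri, comm_ri, ← map_inv, ← map_mul] at habs
    exact (memCL _ _).mp habs
  · -- multiplicative in k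
    intro i j k hk k' hk' g hg
    have habs := jm_abs5 hmono conjC hCsc i j (inr k) ((memCR i k).mpr hk)
      (inr k') ((memCR i k').mpr hk') (inl g) ((memCL j g).mpr hg)
    rw [← map_mul, comm_ri, comm_ri, comm_ri, ← map_mul, ← map_inv, ← map_mul] at habs
    exact (memCL _ _).mp habs
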